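/- Let q be a point of M̃ on the meridian θ = 0 and let u₀ be any real number. Then the function θ ↦ d(q, (u₀, θ)) is strictly increasing on [0, ∞). -/

import Mathlib

open Real Set

noncomputable section

/-- Length of a C¹ curve `c` on `[a,b]` in the warped product metric
`ds² = dt² + m(t)² dθ²` on `M̃ = ℝ²` (coordinates `(t,θ)`). -/
def wLength (m : ℝ → ℝ) (c : ℝ → ℝ × ℝ) (a b : ℝ) : ℝ :=
  ∫ s in a..b,
    Real.sqrt ((deriv (fun u => (c u).1) s) ^ 2 +
      (m (c s).1) ^ 2 * (deriv (fun u => (c u).2) s) ^ 2)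

/-- The Riemannian distance on `M̃`: the infimum of lengths of C¹ curves joining `p` to `q`. -/
def wDist (m : ℝ → ℝ) (p q : ℝ × ℝ) : ℝ :=
  sInf {L : ℝ | ∃ c : ℝ → ℝ × ℝ, ∃ b : ℝ, 0 ≤ b ∧ ContDiff ℝ 1 c ∧
    c 0 = p ∧ c b = q ∧ L = wLength m c 0 b}

/-- `γ = (t(s), θ(s))` is a unit-speed geodesic of the warped product metric:
`t'' = m(t) m'(t) θ'²`, `m(t)² θ'` is constant, and `t'² + m(t)² θ'² = 1`. -/
def IsUnitGeodesic (m : ℝ → ℝ) (γ : ℝ → ℝ × ℝ) : Prop :=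
  ContDiff ℝ 2 γ ∧
  (∀ s, deriv (deriv fun u => (γ u).1) s =
      m (γ s).1 * deriv m (γ s).1 * (deriv (fun u => (γ u).2) s) ^ 2) ∧
  (∃ ν : ℝ, ∀ s, m (γ s).1 ^ 2 * deriv (fun u => (γ u).2) s = ν) ∧
  (∀ s, (deriv (fun u => (γ u).1) s) ^ 2 +
      m (γ s).1 ^ 2 * (deriv (fun u => (γ u).2) s) ^ 2 = 1)

/-- `ν` is the Clairaut constant of the geodesic `γ`: `m(t(s))² θ'(s) = ν` for all `s`. -/
def HasClairaut (m : ℝ → ℝ) (γ : ℝ → ℝ × ℝ) (ν : ℝ) : Prop :=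
  ∀ s, m (γ s).1 ^ 2 * deriv (fun u => (γ u).2) s = ν

/-- The (unit-speed) geodesic segment `γ|[0,a]` is minimal: its length `a` equals
the distance between its endpoints. -/
def IsMinimalSeg (m : ℝ → ℝ) (γ : ℝ → ℝ × ℝ) (a : ℝ) : Prop :=
  wDist m (γ 0) (γ a) = a

/-- `x` is a cut point of `p`: the endpoint of some minimal geodesic segment from `p`
no extension of which is minimal. -/
def IsCutPoint (m : ℝ → ℝ) (p x : ℝ × ℝ) : Prop :=
  ∃ γ : ℝ → ℝ × ℝ, ∃ a : ℝ, IsUnitGeodesic m γ ∧ γ 0 = p ∧ 0 < a ∧ γ a = x ∧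
    IsMinimalSeg m γ a ∧ ∀ ε > 0, ¬ IsMinimalSeg m γ (a + ε)

/-- The cut locus of `p` in `M̃`. -/
def cutLocus (m : ℝ → ℝ) (p : ℝ × ℝ) : Set (ℝ × ℝ) := {x | IsCutPoint m p x}

/-- The Gaussian curvature `K(t) = -m''(t)/m(t)` of the warped product metric. -/
def gaussK (m : ℝ → ℝ) (t : ℝ) : ℝ := -(deriv (deriv m) t) / m t

/-- `ξ(ν) := min {t > 0 | m t = ν}`. -/
def xi (m : ℝ → ℝ) (ν : ℝ) : ℝ := sInf {t : ℝ | 0 < t ∧ m t = ν}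

/-- `φ(ν) := 2∫₀^{ξ(ν)} ν / (m(t) √(m(t)² - ν²)) dt`. -/
def phi (m : ℝ → ℝ) (ν : ℝ) : ℝ :=
  2 * ∫ t in (0:ℝ)..(xi m ν), ν / (m t * Real.sqrt ((m t) ^ 2 - ν ^ 2))

/-- `l(ν) := 2∫_{-ξ(ν)}^{0} m(t) / √(m(t)² - ν²) dt`. -/
def ell (m : ℝ → ℝ) (ν : ℝ) : ℝ :=
  2 * ∫ t in (-(xi m ν))..(0:ℝ), m t / Real.sqrt ((m t) ^ 2 - ν ^ 2)

/-- `inf m`. -/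
def infm (m : ℝ → ℝ) : ℝ := ⨅ t : ℝ, m t

/-- `t₀ := sup {t > 0 | m'(t) < 0}`. -/
def tZero (m : ℝ → ℝ) : ℝ := sSup {t : ℝ | 0 < t ∧ deriv m t < 0}

set_option maxHeartbeats 1000000

lemma key_ineq (x B c k : ℝ) (hB : 0 ≤ B) (hc : 0 ≤ c) (hc1 : c ≤ 1) (hk : 0 ≤ k) :
    Real.sqrt (x^2 + (1-c)*B^2) ≤ (1 + c*k^2/2) * Real.sqrt (x^2+B^2) - c*k*B := by
  set S := Real.sqrt (x^2+B^2) with hSdef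
  have hS0 : 0 ≤ S := Real.sqrt_nonneg _
  have hS : S^2 = x^2 + B^2 := Real.sq_sqrt (by positivity)
  have hBS : B ≤ S := by
    rw [hSdef]
    rw [show B = Real.sqrt (B^2) from (Real.sqrt_sq hB).symm]
    exact Real.sqrt_le_sqrt (by nlinarith [sq_nonneg x, Real.sq_sqrt (sq_nonneg B)])
  have hR : 0 ≤ (1 + c*k^2/2) * S - c*k*B := by
    nlinarith [mul_nonneg (mul_nonneg hc hS0) (sq_nonneg (k-1)),
      mul_nonneg (mul_nonneg hc hk) (sub_nonneg.2 hBS)]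
  calc Real.sqrt (x^2 + (1-c)*B^2)
      ≤ Real.sqrt (((1 + c*k^2/2) * S - c*k*B)^2) := by
        apply Real.sqrt_le_sqrt
        nlinarith [mul_nonneg hc (sq_nonneg (k*S - B)),
          mul_nonneg (mul_nonneg (mul_nonneg hc hc) (sq_nonneg k)) (sq_nonneg (k*S/2 - B))]
    _ = _ := Real.sqrt_sq hR

lemma wLength_nonneg (m : ℝ → ℝ) (c : ℝ → ℝ × ℝ) {a b : ℝ} (hab : a ≤ b) :
    0 ≤ wLength m c a b :=
  intervalIntegral.integral_nonneg hab (fun _ _ => Real.sqrt_nonneg _)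

lemma wDistSet_bddBelow (m : ℝ → ℝ) (p x : ℝ × ℝ) :
    BddBelow {L : ℝ | ∃ c : ℝ → ℝ × ℝ, ∃ b : ℝ, 0 ≤ b ∧ ContDiff ℝ 1 c ∧
      c 0 = p ∧ c b = x ∧ L = wLength m c 0 b} := by
  refine ⟨0, ?_⟩
  rintro L ⟨c, b, hb, -, -, -, rfl⟩
  exact wLength_nonneg m c hb

lemma wDistSet_nonempty (m : ℝ → ℝ) (p x : ℝ × ℝ) :
    Set.Nonempty {L : ℝ | ∃ c : ℝ → ℝ × ℝ, ∃ b : ℝ, 0 ≤ b ∧ ContDiff ℝ 1 c ∧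
      c 0 = p ∧ c b = x ∧ L = wLength m c 0 b} := by
  refine ⟨_, fun s => (p.1 + s * (x.1 - p.1), p.2 + s * (x.2 - p.2)), 1, zero_le_one, ?_, ?_, ?_, rfl⟩
  · exact (contDiff_const.add (contDiff_id.mul contDiff_const)).prodMk
      (contDiff_const.add (contDiff_id.mul contDiff_const))
  · exact Prod.ext (by ring) (by ring)
  · exact Prod.ext (by simp) (by simp)

lemma wDist_le (m : ℝ → ℝ) {p x : ℝ × ℝ} {c : ℝ → ℝ × ℝ} {b : ℝ} (hb : 0 ≤ b)
    (hc : ContDiff ℝ 1 c) (h0 : c 0 = p) (hb' : c b = x) :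
    wDist m p x ≤ wLength m c 0 b :=
  csInf_le (wDistSet_bddBelow m p x) ⟨c, b, hb, hc, h0, hb', rfl⟩

/-- for a point `q` on the meridian `θ = 0` and any real `u₀`, the function
`θ ↦ d(q, (u₀, θ))` is strictly increasing on `[0,∞)`. -/
theorem stmt9 (m : ℝ → ℝ) (hm : ContDiff ℝ (⊤:ℕ∞) m) (hmpos : ∀ t, 0 < m t)
    (hmeven : ∀ t, m (-t) = m t)
    (q : ℝ × ℝ) (hq : q.2 = 0) (u₀ : ℝ) :
    StrictMonoOn (fun θ : ℝ => wDist m q (u₀, θ)) (Ici 0) := by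
  have hmc : Continuous m := hm.continuous
  intro θ₁ hθ₁ θ₂ hθ₂ hlt
  simp only [mem_Ici] at hθ₁ hθ₂
  have hθ₂pos : 0 < θ₂ := lt_of_le_of_lt hθ₁ hlt
  set D : ℝ := wDist m q (u₀, θ₂) with hDdef
  set S₂ : Set ℝ := {L : ℝ | ∃ c : ℝ → ℝ × ℝ, ∃ b : ℝ, 0 ≤ b ∧ ContDiff ℝ 1 c ∧
    c 0 = q ∧ c b = (u₀, θ₂) ∧ L = wLength m c 0 b} with hS₂def
  have hDS : D = sInf S₂ := rfl
  have hne : S₂.Nonempty := wDistSet_nonempty m q (u₀, θ₂)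
  have hbdd : BddBelow S₂ := wDistSet_bddBelow m q (u₀, θ₂)
  have hD0 : 0 ≤ D := by
    rw [hDS]
    refine le_csInf hne ?_
    rintro L ⟨c, b, hb, -, -, -, rfl⟩
    exact wLength_nonneg m c hb
  have hD1 : (0:ℝ) < D + 1 := by linarith
  -- minimum of m on the compact set K
  obtain ⟨tμ, htμK, htμmin⟩ := (isCompact_Icc (a := q.1 - (D+1)) (b := q.1 + (D+1))).exists_isMinOn
    ⟨q.1, by constructor <;> linarith⟩ hmc.continuousOn
  set μ : ℝ := m tμ with hμdef
  have hμpos : 0 < μ := hmpos tμ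
  have hμle : ∀ t ∈ Icc (q.1 - (D+1)) (q.1 + (D+1)), μ ≤ m t := isMinOn_iff.mp htμmin
  set r : ℝ := θ₁ / θ₂ with hrdef
  have hr0 : 0 ≤ r := div_nonneg hθ₁ hθ₂pos.le
  have hr1 : r < 1 := (div_lt_one hθ₂pos).2 hlt
  set cc : ℝ := 1 - r^2 with hccdef
  have hcc0 : 0 < cc := by nlinarith
  have hcc1 : cc ≤ 1 := by nlinarith
  set k : ℝ := μ * θ₂ / (D + 1) with hkdef
  have hk : 0 < k := by positivity
  have hkD : k * (D + 1) = μ * θ₂ := div_mul_cancel₀ _ hD1.ne'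
  set δ : ℝ := cc * k * (μ * θ₂) / 2 with hδdef
  have hδ : 0 < δ := by positivity
  -- main claim
  have hclaim : ∀ L ∈ S₂, L ≤ D + 1 → wDist m q (u₀, θ₁) ≤ L - δ := by
    rintro L ⟨c, b, hb, hc, hc0, hcb, hLdef⟩ hLD
    have hc1 : ContDiff ℝ 1 (fun u => (c u).1) := contDiff_fst.comp hc
    have hc2 : ContDiff ℝ 1 (fun u => (c u).2) := contDiff_snd.comp hc
    set f1 : ℝ → ℝ := deriv (fun u => (c u).1) with hf1
    set f2 : ℝ → ℝ := deriv (fun u => (c u).2) with hf2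
    have hcont1 : Continuous f1 := hc1.continuous_deriv le_rfl
    have hcont2 : Continuous f2 := hc2.continuous_deriv le_rfl
    have hd1 : Differentiable ℝ (fun u => (c u).1) := hc1.differentiable one_ne_zero
    have hd2 : Differentiable ℝ (fun u => (c u).2) := hc2.differentiable one_ne_zero
    set Sf : ℝ → ℝ := fun s => Real.sqrt (f1 s ^ 2 + (m (c s).1) ^ 2 * f2 s ^ 2) with hSfdef
    have hcontS : Continuous Sf :=
      ((hcont1.pow 2).add (((hmc.comp (continuous_fst.comp hc.continuous)).pow 2).mul
        (hcont2.pow 2))).sqrt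
    have hLint : L = ∫ s in (0:ℝ)..b, Sf s := by
      rw [hLdef]; unfold wLength; simp only [hSfdef, hf1, hf2]
    set Bf : ℝ → ℝ := fun s => m (c s).1 * |f2 s| with hBfdef
    have hcontB : Continuous Bf := (hmc.comp (continuous_fst.comp hc.continuous)).mul hcont2.abs
    have hBnn : ∀ s, 0 ≤ Bf s := fun s => mul_nonneg (hmpos _).le (abs_nonneg _)
    have hSfB : ∀ s, Sf s = Real.sqrt (f1 s ^ 2 + Bf s ^ 2) := by
      intro s
      simp only [hSfdef, hBfdef]
      congr 1
      rw [mul_pow, sq_abs]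
    -- the t-coordinate stays in K
    have hrange : ∀ s ∈ Icc (0:ℝ) b, (c s).1 ∈ Icc (q.1 - (D+1)) (q.1 + (D+1)) := by
      intro s hs
      have hftc : ∫ u in (0:ℝ)..s, f1 u = (c s).1 - (c 0).1 :=
        intervalIntegral.integral_deriv_eq_sub (fun x _ => hd1 x)
          (hcont1.intervalIntegrable _ _)
      have habs : |(c s).1 - (c 0).1| ≤ ∫ u in (0:ℝ)..s, |f1 u| := by
        rw [← hftc]
        exact intervalIntegral.abs_integral_le_integral_abs hs.1
      have h1 : (∫ u in (0:ℝ)..s, |f1 u|) ≤ ∫ u in (0:ℝ)..s, Sf u := by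
        refine intervalIntegral.integral_mono_on hs.1 (hcont1.abs.intervalIntegrable _ _)
          (hcontS.intervalIntegrable _ _) ?_
        intro x _
        rw [hSfdef, ← Real.sqrt_sq_eq_abs]
        exact Real.sqrt_le_sqrt (le_add_of_nonneg_right (by positivity))
      have h2 : (∫ u in (0:ℝ)..s, Sf u) ≤ ∫ u in (0:ℝ)..b, Sf u := by
        refine intervalIntegral.integral_mono_interval le_rfl hs.1 hs.2 ?_
          (hcontS.intervalIntegrable _ _)
        filter_upwards with x using Real.sqrt_nonneg _
      have : |(c s).1 - q.1| ≤ D + 1 := by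
        rw [hc0] at habs
        linarith [hLint ▸ hLD]
      rw [abs_le] at this
      constructor <;> linarith [this.1, this.2]
    -- lower bound on ∫ Bf
    have hBlow : μ * θ₂ ≤ ∫ s in (0:ℝ)..b, Bf s := by
      have hftc2 : ∫ u in (0:ℝ)..b, f2 u = θ₂ := by
        rw [intervalIntegral.integral_deriv_eq_sub (fun x _ => hd2 x)
          (hcont2.intervalIntegrable _ _), hcb, hc0, hq]
        simp
      have h1 : θ₂ ≤ ∫ u in (0:ℝ)..b, |f2 u| := by
        calc θ₂ = |∫ u in (0:ℝ)..b, f2 u| := by rw [hftc2, abs_of_nonneg hθ₂pos.le]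
          _ ≤ _ := intervalIntegral.abs_integral_le_integral_abs hb
      calc μ * θ₂ ≤ μ * ∫ u in (0:ℝ)..b, |f2 u| := by
            exact mul_le_mul_of_nonneg_left h1 hμpos.le
        _ = ∫ u in (0:ℝ)..b, μ * |f2 u| := (intervalIntegral.integral_const_mul _ _).symm
        _ ≤ ∫ u in (0:ℝ)..b, Bf u := by
            refine intervalIntegral.integral_mono_on hb
              ((continuous_const.mul hcont2.abs).intervalIntegrable _ _)
              (hcontB.intervalIntegrable _ _) ?_
            intro x hx
            exact mul_le_mul_of_nonneg_right (hμle _ (hrange x hx)) (abs_nonneg _)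
    -- the rescaled curve
    set ct : ℝ → ℝ × ℝ := fun s => ((c s).1, r * (c s).2) with hctdef
    have hctC : ContDiff ℝ 1 ct := hc1.prodMk (contDiff_const.mul hc2)
    have hct0 : ct 0 = q := by
      rw [hctdef]
      simp only [hc0]
      exact Prod.ext rfl (by rw [hq, mul_zero])
    have hctb : ct b = (u₀, θ₁) := by
      rw [hctdef]
      simp only [hcb]
      exact Prod.ext rfl (div_mul_cancel₀ _ hθ₂pos.ne')
    have hderiv1 : (fun u => (ct u).1) = fun u => (c u).1 := rfl
    have hderiv2 : ∀ s, deriv (fun u => (ct u).2) s = r * f2 s := by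
      intro s
      exact deriv_const_mul r (hd2 s)
    have hwle : wDist m q (u₀, θ₁) ≤ wLength m ct 0 b := wDist_le m hb hctC hct0 hctb
    -- bound the length of ct
    have hcontct2 : Continuous (deriv fun u => (ct u).2) :=
      ((contDiff_snd.comp hctC).continuous_deriv le_rfl)
    have hmono : wLength m ct 0 b ≤
        ∫ s in (0:ℝ)..b, ((1 + cc*k^2/2) * Sf s - cc*k*Bf s) := by
      unfold wLength
      refine intervalIntegral.integral_mono_on hb ?_ ?_ ?_
      · exact (((hc1.continuous_deriv le_rfl).pow 2).add
          (((hmc.comp (continuous_fst.comp hctC.continuous)).pow 2).mul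
          (hcontct2.pow 2))).sqrt.intervalIntegrable _ _
      · exact ((continuous_const.mul hcontS).sub
          (continuous_const.mul hcontB)).intervalIntegrable _ _
      · intro s _
        have e1 : deriv (fun u => (ct u).1) s = f1 s := rfl
        have e2 : (m (ct s).1) ^ 2 * (deriv (fun u => (ct u).2) s) ^ 2 = (1 - cc) * Bf s ^ 2 := by
          rw [hderiv2 s]
          show (m (c s).1)^2 * (r * f2 s)^2 = (1 - cc) * (m (c s).1 * |f2 s|)^2
          rw [hccdef]
          rw [mul_pow, mul_pow, sq_abs]
          ring
        rw [e1, e2, hSfB s]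
        exact key_ineq (f1 s) (Bf s) cc k (hBnn s) hcc0.le hcc1 hk.le
    have hsplit : (∫ s in (0:ℝ)..b, ((1 + cc*k^2/2) * Sf s - cc*k*Bf s))
        = (1 + cc*k^2/2) * (∫ s in (0:ℝ)..b, Sf s) - cc*k* ∫ s in (0:ℝ)..b, Bf s := by
      rw [intervalIntegral.integral_sub (f := fun s => (1 + cc*k^2/2) * Sf s)
        (g := fun s => cc*k * Bf s) ((continuous_const.mul hcontS).intervalIntegrable _ _)
        ((continuous_const.mul hcontB).intervalIntegrable _ _),
        intervalIntegral.integral_const_mul, intervalIntegral.integral_const_mul]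
    have hkL : k * L ≤ μ * θ₂ := by
      calc k * L ≤ k * (D + 1) := mul_le_mul_of_nonneg_left hLD hk.le
        _ = μ * θ₂ := hkD
    have hfinal : (1 + cc*k^2/2) * L - cc*k*(μ*θ₂) ≤ L - δ := by
      rw [hδdef]
      nlinarith [mul_nonneg (mul_nonneg hcc0.le hk.le) (sub_nonneg.2 hkL)]
    calc wDist m q (u₀, θ₁) ≤ wLength m ct 0 b := hwle
      _ ≤ ∫ s in (0:ℝ)..b, ((1 + cc*k^2/2) * Sf s - cc*k*Bf s) := hmono
      _ = (1 + cc*k^2/2) * (∫ s in (0:ℝ)..b, Sf s) - cc*k* ∫ s in (0:ℝ)..b, Bf s := hsplit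
      _ ≤ (1 + cc*k^2/2) * L - cc*k*(μ*θ₂) := by
          rw [← hLint]
          exact sub_le_sub_left (mul_le_mul_of_nonneg_left hBlow (by positivity)) _
      _ ≤ L - δ := hfinal
  -- conclude
  have hfin : ∀ ε : ℝ, 0 < ε → wDist m q (u₀, θ₁) < (D - δ) + ε := by
    intro ε hε
    obtain ⟨L, hLS, hLlt⟩ := Real.lt_sInf_add_pos hne (lt_min hε one_pos)
    rw [← hDS] at hLlt
    have hL1 : L ≤ D + 1 := by
      have := min_le_right ε 1
      linarith
    have h := hclaim L hLS hL1
    have := min_le_left ε 1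
    linarith
  have hle : wDist m q (u₀, θ₁) ≤ D - δ := le_of_forall_pos_lt_add hfin
  show wDist m q (u₀, θ₁) < D
  linarith
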